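/- arXiv:2305.04479 — 4 statements merged into one kernel-verified Lean document; each statement's English description precedes it below -/
import Mathlib

section
/- Let G be a maximal bowless directed mixed graph (BDMG) on a finite node set V, and let P be a probability measure on a product measurable space indexed by V. If P is Markovian to G (satisfies the global Markov property), then P satisfies the pairwise Markov property with respect to G: i ⊥_P j | an({i,j}) for every non-adjacent pair i,j. -/
open MeasureTheory ProbabilityTheory

namespace CausalAxioms

/-! ### Mixed graphs (arrows and arcs) -/

structure MixedGraph (V : Type) where
  arrow : V → V → Prop
  arc : V → V → Prop

namespace MixedGraph

variable {V : Type} (G : MixedGraph V)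

/-- Two nodes are adjacent if they are joined by an arrow (in either direction) or an arc. -/
def Adj (i j : V) : Prop :=
  G.arrow i j ∨ G.arrow j i ∨ G.arc i j ∨ G.arc j i

/-- A bowless directed mixed graph: arcs are symmetric, there are no self-loops, and no pair of
nodes is joined by both an arrow and an arc (no bows). -/
def IsBDMG : Prop :=
  (∀ i j, G.arc i j → G.arc j i) ∧ (∀ i, ¬ G.arc i i) ∧ (∀ i, ¬ G.arrow i i) ∧
    ∀ i j, G.arc i j → ¬ G.arrow i j ∧ ¬ G.arrow j i

/-- The set of ancestors of `j`: nodes with a directed path to `j` (excluding `j` itself). -/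
def anc (j : V) : Set V := {i | i ≠ j ∧ Relation.TransGen G.arrow i j}

/-- Ancestors of a set `A`: `an(A) = (⋃ j ∈ A, an(j)) \ A`. -/
def ancSet (A : Set V) : Set V := (⋃ j ∈ A, G.anc j) \ A

/-- The strongly connected component of `i`. -/
def sc (i : V) : Set V :=
  {j | j = i ∨ (Relation.TransGen G.arrow i j ∧ Relation.TransGen G.arrow j i)}

/-- Parents of `i`. -/
def pa (i : V) : Set V := {j | G.arrow j i}

/-- `pa({i,j}) = (pa(i) ∪ pa(j)) \ {i,j}`. -/
def paPair (i j : V) : Set V := (G.pa i ∪ G.pa j) \ {i, j}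

/-- No directed cycles. -/
def Acyclic : Prop := ∀ i, ¬ Relation.TransGen G.arrow i i

/-- A directed ancestral graph: a BDMG with no directed cycles and no arc `i ↔ j`
with `i ∈ an(j)`. -/
def DirectedAncestral : Prop :=
  G.IsBDMG ∧ G.Acyclic ∧ ∀ i j, G.arc i j → i ∉ G.anc j

/-- The acyclification of a directed mixed graph. -/
def acy : MixedGraph V where
  arrow j i := (∃ k ∈ G.sc i, G.arrow j k) ∧ j ∉ G.sc i
  arc i j := i ≠ j ∧ ∃ i' ∈ G.sc i, ∃ j' ∈ G.sc j, i' = j' ∨ G.arc i' j'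

end MixedGraph

/-- A direction/type for an edge along a path: a forward arrow, a backward arrow, or an arc. -/
inductive EDir : Type
  | fwd | bwd | biarc

/-- `G.IsEdgeDir d a b` : the graph has an edge of type `d` between `a` and `b`. -/
def MixedGraph.IsEdgeDir {V : Type} (G : MixedGraph V) : EDir → V → V → Prop
  | .fwd, a, b => G.arrow a b
  | .bwd, a, b => G.arrow b a
  | .biarc, a, b => G.arc a b ∨ G.arc b a

/-- A path in a mixed graph, recorded by its node sequence `v 0, …, v n` and the type of
each edge; all nodes are distinct. -/
structure PathIn {V : Type} (G : MixedGraph V) where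
  n : ℕ
  v : ℕ → V
  e : ℕ → EDir
  one_le : 1 ≤ n
  edge : ∀ r, r < n → G.IsEdgeDir (e r) (v r) (v (r + 1))
  inj : ∀ r, r ≤ n → ∀ s, s ≤ n → v r = v s → r = s

namespace PathIn

variable {V : Type} {G : MixedGraph V} (p : PathIn G)

/-- Edge `r` has an arrowhead at its right endpoint `v (r+1)`. -/
def headRight (r : ℕ) : Prop := p.e r = EDir.fwd ∨ p.e r = EDir.biarc

/-- Edge `r` has an arrowhead at its left endpoint `v r`. -/
def headLeft (r : ℕ) : Prop := p.e r = EDir.bwd ∨ p.e r = EDir.biarc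

/-- The inner node `v r` (for `1 ≤ r ≤ n-1`) is a collider. -/
def Collider (r : ℕ) : Prop := p.headRight (r - 1) ∧ p.headLeft r

/-- The path is σ-connecting given `C`. -/
def SigmaConnecting (C : Set V) : Prop :=
  ∀ r, 1 ≤ r → r < p.n →
    (p.Collider r → p.v r ∈ C ∪ G.ancSet C) ∧
    (¬ p.Collider r →
      p.v r ∉ C ∨
        ((p.headLeft (r - 1) → p.v (r - 1) ∈ G.sc (p.v r)) ∧
          (p.headRight r → p.v (r + 1) ∈ G.sc (p.v r))))

/-- The path is m-connecting given `C`. -/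
def MConnecting (C : Set V) : Prop :=
  ∀ r, 1 ≤ r → r < p.n →
    (p.Collider r → p.v r ∈ C ∪ G.ancSet C) ∧ (¬ p.Collider r → p.v r ∉ C)

end PathIn

/-- σ-separation of `A` and `B` given `C`. -/
def SigmaSep {V : Type} (G : MixedGraph V) (A B C : Set V) : Prop :=
  ¬ ∃ p : PathIn G, p.v 0 ∈ A ∧ p.v p.n ∈ B ∧ p.SigmaConnecting C

/-- m-separation of `A` and `B` given `C`. -/
def MSep {V : Type} (G : MixedGraph V) (A B C : Set V) : Prop :=
  ¬ ∃ p : PathIn G, p.v 0 ∈ A ∧ p.v p.n ∈ B ∧ p.MConnecting C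

/-- A separable pair: a non-adjacent pair that can be σ-separated by some set. -/
def SeparablePair {V : Type} (G : MixedGraph V) (i j : V) : Prop :=
  ¬ G.Adj i j ∧ ∃ C : Set V, i ∉ C ∧ j ∉ C ∧ SigmaSep G {i} {j} C

/-- A separable pair in the m-separation sense. -/
def MSeparablePair {V : Type} (G : MixedGraph V) (i j : V) : Prop :=
  ¬ G.Adj i j ∧ ∃ C : Set V, i ∉ C ∧ j ∉ C ∧ MSep G {i} {j} C

/-- A graph is maximal if every non-adjacent pair is separable. -/
def MaximalGraph {V : Type} (G : MixedGraph V) : Prop :=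
  ∀ i j, i ≠ j → ¬ G.Adj i j → SeparablePair G i j

/-- Two graphs are Markov equivalent if they induce the same σ-separations. -/
def MarkovEquiv {V : Type} (G₁ G₂ : MixedGraph V) : Prop :=
  ∀ A B C : Set V, SigmaSep G₁ A B C ↔ SigmaSep G₂ A B C

/-- A primitive inducing path (PIP): a path with at least 3 nodes, all of whose edges are arcs or
arrows within a strongly connected component (except that the first edge may be `i → q₁` and the
last may be `q_r ← j`), and all of whose inner nodes are ancestors of one of the endpoints. -/
def IsPIP {V : Type} (G : MixedGraph V) (p : PathIn G) : Prop :=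
  2 ≤ p.n ∧
    (∀ r, r < p.n →
      p.e r = EDir.biarc ∨ p.v r ∈ G.sc (p.v (r + 1)) ∨
        (r = 0 ∧ p.e r = EDir.fwd) ∨ (r + 1 = p.n ∧ p.e r = EDir.bwd)) ∧
    ∀ r, 1 ≤ r → r < p.n → p.v r ∈ G.ancSet {p.v 0, p.v p.n}

/-! ### Conditional independence for coordinates of a product space -/

variable {V : Type} {X : V → Type} [∀ i, MeasurableSpace (X i)]

/-- The σ-algebra on `∀ i, X i` generated by the coordinates in `A`. -/
def coordσ (X : V → Type) [∀ i, MeasurableSpace (X i)] (A : Set V) :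
    MeasurableSpace (∀ i, X i) :=
  MeasurableSpace.comap (A.restrict) MeasurableSpace.pi

/-- `CI P A B C` : the coordinates in `A` are conditionally independent of the coordinates in
`B` given the coordinates in `C`, under the measure `P`. -/
def CI (P : Measure (∀ i, X i)) (A B C : Set V) : Prop :=
  ∀ s t : Set (∀ i, X i),
    MeasurableSet[coordσ X A] s → MeasurableSet[coordσ X B] t →
      (P⟦s ∩ t | coordσ X C⟧) =ᵐ[P] (P⟦s | coordσ X C⟧) * (P⟦t | coordσ X C⟧)

/-- The intersection property. -/
def IntersectionProp (P : Measure (∀ i, X i)) : Prop :=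
  ∀ A B C D : Set V, Disjoint A B → Disjoint A C → Disjoint A D → Disjoint B C →
    Disjoint B D → Disjoint C D →
    CI P A B (C ∪ D) → CI P A D (C ∪ B) → CI P A (B ∪ D) C

/-- The composition property. -/
def CompositionProp (P : Measure (∀ i, X i)) : Prop :=
  ∀ A B C D : Set V, Disjoint A B → Disjoint A C → Disjoint A D → Disjoint B C →
    Disjoint B D → Disjoint C D →
    CI P A B C → CI P A D C → CI P A (B ∪ D) C

/-- Singleton-transitivity. -/
def SingletonTransProp (P : Measure (∀ i, X i)) : Prop :=
  ∀ i j k : V, ∀ C : Set V, i ≠ j → i ≠ k → j ≠ k → i ∉ C → j ∉ C → k ∉ C →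
    CI P {i} {j} C → CI P {i} {j} (C ∪ {k}) →
      CI P {i} {k} C ∨ CI P {j} {k} C

/-- The global Markov property with respect to σ-separation. -/
def GlobalMarkovSigma (G : MixedGraph V) (P : Measure (∀ i, X i)) : Prop :=
  ∀ A B C : Set V, Disjoint A B → Disjoint A C → Disjoint B C →
    SigmaSep G A B C → CI P A B C

/-- The pairwise Markov property: `i ⊥ j | an({i,j})` for every non-adjacent pair. -/
def PairwiseMarkov (G : MixedGraph V) (P : Measure (∀ i, X i)) : Prop :=
  ∀ i j : V, i ≠ j → ¬ G.Adj i j → CI P {i} {j} (G.ancSet {i, j})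

/-- The converse pairwise Markov property: every edge yields a conditional dependence. -/
def ConversePairwiseMarkov (G : MixedGraph V) (P : Measure (∀ i, X i)) : Prop :=
  ∀ i j : V, i ≠ j → G.Adj i j → ¬ CI P {i} {j} (G.ancSet {i, j})

/-! ### Interventional families -/

variable (Pdo : V → Measure (∀ i, X i))

/-- The set of causes of `k`. -/
def cause (k : V) : Set V := {i | i ≠ k ∧ ¬ CI (Pdo i) {i} {k} ∅}

/-- The set of effects of `i`. -/
def effect (i : V) : Set V := {k | k ≠ i ∧ i ∈ cause Pdo k}

/-- `cause(A) = (⋃ k ∈ A, cause(k)) \ A`. -/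
def causeSet (A : Set V) : Set V := (⋃ k ∈ A, cause Pdo k) \ A

/-- The causal cycle containing `i`. -/
def cc (i : V) : Set V := {k | k = i ∨ (k ∈ cause Pdo i ∧ i ∈ cause Pdo k)}

/-- A transitive interventional family. -/
def TransitiveFam : Prop :=
  ∀ i j k : V, i ≠ j → j ≠ k → i ≠ k →
    i ∈ cause Pdo j → j ∈ cause Pdo k → i ∈ cause Pdo k

/-- Given a candidate direct-cause assignment `dc`, the `i`-intervened causes of `k`:
the ancestors of `k` in the graph with arrows `a → b` iff `a ∈ dc b`, with all arrows
pointing to `i` removed. -/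
def iotaFrom (dc : V → Set V) (i k : V) : Set V :=
  MixedGraph.anc ⟨fun a b => a ∈ dc b ∧ b ≠ i, fun _ _ => False⟩ k

/-- The first step of the iterative procedure defining direct causes. -/
def dcInit : V → Set V := fun k =>
  {i ∈ cause Pdo k | ¬ CI (Pdo i) {i} {k} (cause Pdo k \ {i})}

/-- One step of the iterative procedure defining direct causes. -/
def dcStep (dc : V → Set V) : V → Set V := fun k =>
  {i ∈ dc k | ¬ CI (Pdo i) {i} {k} (iotaFrom dc i k \ {i})}

/-- The set of direct causes of each node, obtained by iterating the procedure to its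
fixed point (reached after at most `|V|²` steps). -/
def dcause [Fintype V] : V → Set V :=
  (dcStep Pdo)^[Fintype.card V * Fintype.card V] (dcInit Pdo)

/-- The set of intervened causes of `k` after intervention on `i`. -/
def iotaCause [Fintype V] (i k : V) : Set V := iotaFrom (dcause Pdo) i k

/-- `ιcause_i(A) = (⋃ k ∈ A, ιcause_i(k)) \ A`. -/
def iotaCauseSet [Fintype V] (i : V) (A : Set V) : Set V :=
  (⋃ k ∈ A, iotaCause Pdo i k) \ A

/-- The causal structure `S(𝒫_do)`. -/
def Sgraph [Fintype V] : MixedGraph V :=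
  ⟨fun a b => a ∈ dcause Pdo b, fun _ _ => False⟩

/-- The `i`-intervened causal structure `S_i(𝒫_do)`. -/
def Sigraph [Fintype V] (i : V) : MixedGraph V :=
  ⟨fun a b => a ∈ dcause Pdo b ∧ b ≠ i, fun _ _ => False⟩

/-- The condition for placing an arc between `j` and `k` in the `i`-intervened graph. -/
def GiArcCond [Fintype V] (i j k : V) : Prop :=
  j ≠ i ∧ k ≠ i ∧ j ≠ k ∧ j ∉ dcause Pdo k ∧ k ∉ dcause Pdo j ∧
    ¬ CI (Pdo i) {j} {k} (iotaCauseSet Pdo i {j, k})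

/-- The `i`-intervened graph `G_i(𝒫_do)`. -/
def Gi [Fintype V] (i : V) : MixedGraph V where
  arrow a b := a ∈ dcause Pdo b ∧ b ≠ i
  arc j k := GiArcCond Pdo i j k ∨ GiArcCond Pdo i k j

/-- The condition for placing an arc between `j` and `k` in the causal graph. -/
def GcArcCond [Fintype V] (j k : V) : Prop :=
  j ≠ k ∧ j ∉ dcause Pdo k ∧ k ∉ dcause Pdo j ∧
    ∀ i, i ≠ j → i ≠ k → (Gi Pdo i).arc j k

/-- The causal graph `G(𝒫_do)`. -/
def Gcausal [Fintype V] : MixedGraph V where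
  arrow a b := a ∈ dcause Pdo b
  arc j k := GcArcCond Pdo j k ∨ GcArcCond Pdo k j

/-- An observable interventional family (Axiom 2). -/
def Observable [Fintype V] (P : Measure (∀ i, X i)) : Prop :=
  (∀ j k : V, SeparablePair (Gcausal Pdo) j k → ∀ i, i ≠ j → i ≠ k →
      CI (Pdo i) {j} {k} (iotaCauseSet Pdo i {j, k}) →
        CI P {j} {k} (causeSet Pdo {j, k})) ∧
  ∀ k, ∀ i ∈ cause Pdo k,
      CI (Pdo i) {i} {k} (iotaCauseSet Pdo i {i, k}) →
        CI P {i} {k} (causeSet Pdo {i, k})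

/-- A strongly observable interventional family (Axioms 2 and 3). -/
def StronglyObservable [Fintype V] (P : Measure (∀ i, X i)) : Prop :=
  Observable Pdo P ∧
  (∀ i j k : V, i ≠ j → i ≠ k → j ≠ k →
      CI P {j} {k} (causeSet Pdo {j, k}) →
        CI (Pdo i) {j} {k} (iotaCauseSet Pdo i {j, k})) ∧
  ∀ k, ∀ i ∈ cause Pdo k,
      CI P {i} {k} (causeSet Pdo {i, k}) →
        CI (Pdo i) {i} {k} (iotaCauseSet Pdo i {i, k})

/-! ### Quantifiable interventional families -/

/-- `κ` is a regular conditional probability for `P` given the coordinates in `C`. -/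
def IsRCP (P : Measure (∀ i, X i)) (C : Set V)
    (κ : Kernel (∀ j : C, X j) (∀ i, X i)) : Prop :=
  IsMarkovKernel κ ∧
    ∀ F : Set (∀ i, X i), MeasurableSet F →
      ∀ S : Set (∀ j : C, X j), MeasurableSet S →
        P (F ∩ C.restrict ⁻¹' S) = ∫⁻ y in S, κ y F ∂(P.map C.restrict)

/-- Two measures are equivalent if they have the same null sets. -/
def MeasEquiv {α : Type} [MeasurableSpace α] (μ ν : Measure α) : Prop :=
  μ ≪ ν ∧ ν ≪ μ

/-- `{𝒫_do, P}` is compatible: for all distinct `i,k`, the marginal of `P_do(i)` on the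
coordinates `cause(k) ∪ {k}` is equivalent to the corresponding marginal of `P`. -/
def Compatible (P : Measure (∀ i, X i)) : Prop :=
  ∀ i k : V, i ≠ k →
    MeasEquiv ((Pdo i).map (insert k (cause Pdo k)).restrict)
      (P.map (insert k (cause Pdo k)).restrict)

/-- A quantifiable interventional family (Axiom 4). -/
def Quantifiable (P : Measure (∀ i, X i)) : Prop :=
  Compatible Pdo P ∧
    ∀ i k : V, i ≠ k →
      ∃ κ₁ : Kernel (∀ j : (insert i (cause Pdo k) : Set V), X j) (∀ i, X i),
      ∃ κ₂ : Kernel (∀ j : (cause Pdo k : Set V), X j) (∀ i, X i),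
        IsRCP (Pdo i) (insert i (cause Pdo k)) κ₁ ∧
        IsRCP P (cause Pdo k) κ₂ ∧
        ∀ x, ((κ₁ x).map fun y => y k) =
          ((κ₂ (Set.restrict₂ (Set.subset_insert i (cause Pdo k)) x)).map fun y => y k)

/-- A bivariate-quantifiable interventional family (Axioms 4 and 5). -/
def BivQuantifiable (P : Measure (∀ i, X i)) : Prop :=
  Quantifiable Pdo P ∧
    ∀ i j k : V, i ≠ j → i ≠ k → j ≠ k → j ∉ cause Pdo k → k ∉ cause Pdo j →
      ∃ κ₁ : Kernel (∀ l : (insert i (causeSet Pdo {j, k}) : Set V), X l) (∀ i, X i),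
      ∃ κ₂ : Kernel (∀ l : (causeSet Pdo {j, k} : Set V), X l) (∀ i, X i),
        IsRCP (Pdo i) (insert i (causeSet Pdo {j, k})) κ₁ ∧
        IsRCP P (causeSet Pdo {j, k}) κ₂ ∧
        ∀ x, ((κ₁ x).map fun y => (y j, y k)) =
          ((κ₂ (Set.restrict₂ (Set.subset_insert i (causeSet Pdo {j, k})) x)).map
            fun y => (y j, y k))

/-! ### Structural causal models -/

/-- A structural causal model together with its standard single-node interventions. -/
structure SCM (V : Type) (X : V → Type) [∀ i, MeasurableSpace (X i)]
    (Ω : Type) [MeasurableSpace Ω] (E : V → Type) [∀ i, MeasurableSpace (E i)] where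
  /-- the associated graph -/
  G : MixedGraph V
  /-- the underlying probability measure -/
  μ : Measure Ω
  prob : IsProbabilityMeasure μ
  /-- the noise variables -/
  ε : ∀ i, Ω → E i
  ε_meas : ∀ i, Measurable (ε i)
  /-- the structural assignments -/
  φ : ∀ i, (∀ j : (G.pa i : Set V), X j) → E i → X i
  /-- the solution of the system of structural equations -/
  sol : Ω → ∀ i, X i
  sol_meas : Measurable sol
  sol_eq : ∀ ω i, sol ω i = φ i ((G.pa i).restrict (sol ω)) (ε i ω)
  /-- noise vectors on disjoint sets `A`, `B` are independent iff no arc joins `A` and `B` -/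
  noise_indep : ∀ A B : Set V, Disjoint A B →
    (IndepFun (fun ω => fun a : A => ε a ω) (fun ω => fun b : B => ε b ω) μ ↔
      ¬ ∃ a ∈ A, ∃ b ∈ B, G.arc a b ∨ G.arc b a)
  /-- the intervention variables `X̃_i` -/
  tilde : ∀ i, Ω → X i
  tilde_meas : ∀ i, Measurable (tilde i)
  /-- `X̃_i` is distributed as `X_i` -/
  tilde_law : ∀ i, μ.map (tilde i) = μ.map fun ω => sol ω i
  /-- `X̃_i` is independent of all the noises -/
  tilde_indep : ∀ i, IndepFun (tilde i) (fun ω => fun j : V => ε j ω) μ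
  /-- the solution of the intervened system of structural equations -/
  isol : ∀ i, Ω → ∀ j, X j
  isol_meas : ∀ i, Measurable (isol i)
  isol_self : ∀ i ω, isol i ω i = tilde i ω
  isol_eq : ∀ i j, j ≠ i → ∀ ω, isol i ω j = φ j ((G.pa j).restrict (isol i ω)) (ε j ω)

variable {Ω : Type} [MeasurableSpace Ω] {E : V → Type} [∀ i, MeasurableSpace (E i)]

/-- The family of standard-intervention distributions `𝒫_do(𝒞)`. -/
noncomputable def SCM.pdo (M : SCM V X Ω E) : V → Measure (∀ i, X i) :=
  fun i => M.μ.map (M.isol i)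

/-- The joint (observational) distribution `P_𝒞` of the SCM. -/
noncomputable def SCM.law (M : SCM V X Ω E) : Measure (∀ i, X i) := M.μ.map M.sol

instance (M : SCM V X Ω E) (i : V) : IsProbabilityMeasure (M.pdo i) := by
  haveI := M.prob
  exact Measure.isProbabilityMeasure_map (M.isol_meas i).aemeasurable

instance (M : SCM V X Ω E) : IsProbabilityMeasure M.law := by
  haveI := M.prob
  exact Measure.isProbabilityMeasure_map M.sol_meas.aemeasurable

/-- The edge-cause condition: every arrow `i → j` of the SCM graph makes `i` a direct cause
of `j` for the interventional family. -/
def SCM.EdgeCause [Fintype V] (M : SCM V X Ω E) : Prop :=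
  ∀ i j, M.G.arrow i j → i ∈ dcause M.pdo j

/-! ### Auxiliary material for Statement 1 -/

section PairwiseAux

namespace EDir

/-- Flip an edge direction. -/
def flip : EDir → EDir
  | .fwd => .bwd
  | .bwd => .fwd
  | .biarc => .biarc

end EDir

namespace PathIn

variable {V : Type} {G : MixedGraph V}

/-- The strongly-connected-component conditions at an inner node. -/
def scCond (p : PathIn G) (r : ℕ) : Prop :=
  (p.headLeft (r - 1) → p.v (r - 1) ∈ G.sc (p.v r)) ∧
    (p.headRight r → p.v (r + 1) ∈ G.sc (p.v r))

/-- A generalized connectivity predicate: every collider lies in `S`, and every non-collider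
either avoids `C` or satisfies the sc-conditions. -/
def PPred (p : PathIn G) (S C : Set V) : Prop :=
  ∀ r, 1 ≤ r → r < p.n →
    (p.Collider r → p.v r ∈ S) ∧ (¬ p.Collider r → p.v r ∉ C ∨ p.scCond r)

lemma sigmaConnecting_iff_pPred (p : PathIn G) (C : Set V) :
    p.SigmaConnecting C ↔ p.PPred (C ∪ G.ancSet C) C := Iff.rfl

/-- The reverse of a path. -/
def reverse (p : PathIn G) : PathIn G where
  n := p.n
  v t := p.v (p.n - t)
  e t := (p.e (p.n - 1 - t)).flip
  one_le := p.one_le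
  edge := by
    intro r hr
    have h := p.edge (p.n - 1 - r) (by omega)
    have e1 : p.n - 1 - r + 1 = p.n - r := by omega
    have e2 : p.n - (r + 1) = p.n - 1 - r := by omega
    rw [e1] at h
    show G.IsEdgeDir ((p.e (p.n - 1 - r)).flip) (p.v (p.n - r)) (p.v (p.n - (r + 1)))
    rw [e2]
    cases hE : p.e (p.n - 1 - r) <;> rw [hE] at h <;>
      simp only [MixedGraph.IsEdgeDir, EDir.flip] at h ⊢ <;> tauto
  inj := by
    intro r hr s hs h
    have := p.inj (p.n - r) (by omega) (p.n - s) (by omega) h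
    omega

@[simp] lemma reverse_n (p : PathIn G) : p.reverse.n = p.n := rfl

lemma reverse_v (p : PathIn G) (t : ℕ) : p.reverse.v t = p.v (p.n - t) := rfl

lemma reverse_e (p : PathIn G) (t : ℕ) : p.reverse.e t = (p.e (p.n - 1 - t)).flip := rfl

lemma reverse_headLeft (p : PathIn G) (t : ℕ) :
    p.reverse.headLeft t ↔ p.headRight (p.n - 1 - t) := by
  unfold headLeft headRight
  rw [reverse_e]
  cases p.e (p.n - 1 - t) <;> simp [EDir.flip]

lemma reverse_headRight (p : PathIn G) (t : ℕ) :
    p.reverse.headRight t ↔ p.headLeft (p.n - 1 - t) := by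
  unfold headLeft headRight
  rw [reverse_e]
  cases p.e (p.n - 1 - t) <;> simp [EDir.flip]

lemma reverse_collider (p : PathIn G) {r : ℕ} (h1 : 1 ≤ r) (h2 : r < p.n) :
    p.reverse.Collider r ↔ p.Collider (p.n - r) := by
  unfold Collider
  rw [reverse_headLeft, reverse_headRight]
  have e1 : p.n - 1 - (r - 1) = p.n - r := by omega
  have e2 : p.n - 1 - r = p.n - r - 1 := by omega
  rw [e1, e2, and_comm]

lemma reverse_scCond (p : PathIn G) {r : ℕ} (h1 : 1 ≤ r) (h2 : r < p.n) :
    p.reverse.scCond r ↔ p.scCond (p.n - r) := by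
  unfold scCond
  rw [reverse_headLeft, reverse_headRight, reverse_v, reverse_v, reverse_v]
  have e1 : p.n - 1 - (r - 1) = p.n - r := by omega
  have e2 : p.n - 1 - r = p.n - r - 1 := by omega
  have e3 : p.n - (r - 1) = p.n - r + 1 := by omega
  have e4 : p.n - (r + 1) = p.n - r - 1 := by omega
  rw [e1, e2, e3, e4, and_comm]

lemma PPred.reverse {p : PathIn G} {S C : Set V} (h : p.PPred S C) : p.reverse.PPred S C := by
  intro r h1 h2
  have h2' : r < p.n := h2
  obtain ⟨hc, hnc⟩ := h (p.n - r) (by omega) (by omega)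
  rw [p.reverse_collider h1 h2', p.reverse_scCond h1 h2']
  exact ⟨hc, hnc⟩

open Classical in
/-- The set of "bad" colliders of a path relative to a conditioning set. -/
noncomputable def badF (p : PathIn G) (C : Set V) : Finset ℕ :=
  (Finset.range p.n).filter fun r => 1 ≤ r ∧ p.Collider r ∧ p.v r ∉ C ∪ G.ancSet C

open Classical in
lemma mem_badF {p : PathIn G} {C : Set V} {r : ℕ} :
    r ∈ p.badF C ↔ r < p.n ∧ 1 ≤ r ∧ p.Collider r ∧ p.v r ∉ C ∪ G.ancSet C := by
  unfold badF
  rw [Finset.mem_filter, Finset.mem_range]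

lemma badF_reverse_card (p : PathIn G) (C : Set V) :
    (p.reverse.badF C).card = (p.badF C).card := by
  apply Finset.card_bij' (fun r _ => p.n - r) (fun r _ => p.n - r)
  · intro a ha
    rw [mem_badF] at ha ⊢
    obtain ⟨han, ha1, hac, haC⟩ := ha
    have han' : a < p.n := han
    refine ⟨by omega, by omega, ?_, ?_⟩
    · exact (p.reverse_collider ha1 han').mp hac
    · rw [p.reverse_v] at haC; exact haC
  · intro a ha
    rw [mem_badF] at ha ⊢
    obtain ⟨han, ha1, hac, haC⟩ := ha
    refine ⟨by rw [PathIn.reverse_n]; omega, by omega, ?_, ?_⟩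
    · rw [p.reverse_collider (by omega) (by omega)]
      have : p.n - (p.n - a) = a := by omega
      rw [this]; exact hac
    · rw [p.reverse_v]
      have : p.n - (p.n - a) = a := by omega
      rw [this]; exact haC
  · intro a ha
    rw [mem_badF] at ha
    have h1 : a < p.n := by
      have := ha.1
      simpa using this
    omega
  · intro a ha
    rw [mem_badF] at ha
    have h1 : a < p.n := ha.1
    omega

end PathIn

section Chains

variable {α : Type} {r : α → α → Prop}

private lemma exists_chain {a b : α} (h : Relation.TransGen r a b) :
    ∃ (m : ℕ) (d : ℕ → α), 0 < m ∧ d 0 = a ∧ d m = b ∧ ∀ k, k < m → r (d k) (d (k + 1)) := by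
  induction h with
  | single hab =>
      rename_i b'
      refine ⟨1, fun k => if k = 0 then a else b', by omega, by simp, by simp, ?_⟩
      intro k hk
      have : k = 0 := by omega
      subst this
      simpa using hab
  | tail h₁ h₂ ih =>
      rename_i b' c'
      obtain ⟨m, d, hm, h0, hb, he⟩ := ih
      refine ⟨m + 1, fun k => if k ≤ m then d k else c', by omega, by simp [h0],
        by simp only []; rw [if_neg (by omega)], ?_⟩
      intro k hk
      by_cases hkm : k < m
      · have h1 : k ≤ m := by omega
        have h2 : k + 1 ≤ m := by omega
        simp only [if_pos h1, if_pos h2]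
        exact he k hkm
      · have hk' : k = m := by omega
        subst hk'
        simp only [le_refl, if_pos]
        rw [if_neg (by omega), hb]
        exact h₂

private lemma chain_transGen {d : ℕ → α} {m : ℕ}
    (he : ∀ k, k < m → r (d k) (d (k + 1))) :
    ∀ u, 1 ≤ u → u ≤ m → Relation.TransGen r (d 0) (d u) := by
  intro u
  induction u with
  | zero => omega
  | succ u ih =>
      intro _ hu
      rcases Nat.eq_zero_or_pos u with h | h
      · subst h
        exact Relation.TransGen.single (he 0 (by omega))
      · exact (ih (by omega) (by omega)).tail (he u (by omega))

private lemma exists_simple_chain {a b : α} (hne : a ≠ b) (h : Relation.TransGen r a b) :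
    ∃ (m : ℕ) (d : ℕ → α), 0 < m ∧ d 0 = a ∧ d m = b ∧
      (∀ k, k < m → r (d k) (d (k + 1))) ∧
      ∀ x, x ≤ m → ∀ y, y ≤ m → d x = d y → x = y := by
  classical
  obtain ⟨m₀, d₀, hm₀, h0₀, hb₀, he₀⟩ := exists_chain h
  have hQ : ∃ m, ∃ d : ℕ → α, d 0 = a ∧ d m = b ∧ ∀ k, k < m → r (d k) (d (k + 1)) :=
    ⟨m₀, d₀, h0₀, hb₀, he₀⟩
  obtain ⟨d, h0, hb, he⟩ := Nat.find_spec hQ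
  set m := Nat.find hQ with hm_def
  have hmpos : 0 < m := by
    rcases Nat.eq_zero_or_pos m with h' | h'
    · exfalso
      apply hne
      rw [← h0, ← hb, h']
    · exact h'
  refine ⟨m, d, hmpos, h0, hb, he, ?_⟩
  intro x hx y hy hxy
  by_contra hne'
  wlog hlt : x < y generalizing x y
  · exact this y hy x hx hxy.symm (Ne.symm hne') (by omega)
  have hym : y ≤ m := hy
  have hQ' : ∃ d' : ℕ → α, d' 0 = a ∧ d' (m - (y - x)) = b ∧
      ∀ k, k < m - (y - x) → r (d' k) (d' (k + 1)) := by
    refine ⟨fun k => if k ≤ x then d k else d (k + (y - x)), ?_, ?_, ?_⟩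
    · simp [h0]
    · simp only []
      by_cases hc : m - (y - x) ≤ x
      · have hxm : m - (y - x) = x := by omega
        have hym' : y = m := by omega
        rw [if_pos hc, hxm, hxy, hym', hb]
      · rw [if_neg hc]
        have : m - (y - x) + (y - x) = m := by omega
        rw [this, hb]
    · intro k hk
      simp only []
      by_cases hkx : k < x
      · have h1 : k ≤ x := by omega
        have h2 : k + 1 ≤ x := by omega
        rw [if_pos h1, if_pos h2]
        exact he k (by omega)
      · by_cases hkx' : k = x
        · have h1 : k ≤ x := by omega
          rw [if_pos h1, if_neg (by omega), hkx', hxy]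
          have hylt : y < m := by omega
          have h2 : x + 1 + (y - x) = y + 1 := by omega
          rw [h2]
          exact he y hylt
        · rw [if_neg (by omega), if_neg (by omega)]
          have h1 : k + (y - x) + 1 = k + 1 + (y - x) := by omega
          rw [← h1]
          exact he (k + (y - x)) (by omega)
  have := Nat.find_min hQ (show m - (y - x) < m by omega) hQ'
  exact this

end Chains

end PairwiseAux

section PairwiseAux2

variable {V : Type} {G : MixedGraph V}

private lemma mem_anc_of_arrow {x y z : V} (hxz : x ≠ z) (harr : G.arrow x y)
    (hy : y ∈ G.anc z) : x ∈ G.anc z :=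
  ⟨hxz, Relation.TransGen.head harr hy.2⟩

private lemma construct_step (S C : Set V) (p : PathIn G) (r : ℕ)
    (h1 : 1 ≤ r) (h2 : r < p.n) (hcol : p.Collider r)
    (hbad : p.v r ∉ C ∪ G.ancSet C) (hanc : p.v r ∈ G.anc (p.v p.n))
    (hPred : p.PPred S C) :
    ∃ q : PathIn G, q.v 0 = p.v 0 ∧ q.v q.n = p.v p.n ∧ q.PPred S C ∧
      (q.badF C).card < (p.badF C).card := by
  classical
  obtain ⟨hneq, htg⟩ := hanc
  obtain ⟨m, d, hm, hd0, hdm, hde, hdinj⟩ := exists_simple_chain hneq htg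
  have hQr : ∃ s, s ≤ r ∧ ∃ t, t ≤ m ∧ p.v s = d t := ⟨r, le_refl r, 0, by omega, hd0.symm⟩
  obtain ⟨hsr, t, htm, hvst⟩ := Nat.find_spec hQr
  set s := Nat.find hQr with hs_def
  have hmin : ∀ a, a < s → ∀ t', t' ≤ m → p.v a ≠ d t' := by
    intro a ha t' ht' hEq
    exact Nat.find_min hQr ha ⟨by omega, t', ht', hEq⟩
  have htlt : t < m := by
    rcases eq_or_lt_of_le htm with hEq | h
    · exfalso
      have hvs : p.v s = p.v p.n := by rw [hvst, hEq, hdm]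
      have := p.inj s (by omega) p.n (le_refl _) hvs
      omega
    · exact h
  have hvr_notC : p.v r ∉ C := fun h => hbad (Or.inl h)
  have hdnotC : ∀ u, u < m → d u ∉ C := by
    intro u hu hC
    rcases Nat.eq_zero_or_pos u with hu0 | hu0
    · subst hu0
      rw [hd0] at hC
      exact hvr_notC hC
    · apply hbad
      right
      have htg' : Relation.TransGen G.arrow (p.v r) (d u) := by
        rw [← hd0]; exact chain_transGen hde u hu0 (by omega)
      have hne' : p.v r ≠ d u := by
        intro hEq
        have : (0 : ℕ) = u := hdinj 0 (by omega) u (by omega) (by rw [hd0, hEq])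
        omega
      refine ⟨Set.mem_biUnion hC ⟨hne', htg'⟩, hvr_notC⟩
  have hN1 : 1 ≤ s + (m - t) := by omega
  have hedge : ∀ k, k < s + (m - t) →
      G.IsEdgeDir ((fun k => if k < s then p.e k else EDir.fwd) k)
        ((fun k => if k ≤ s then p.v k else d (t + (k - s))) k)
        ((fun k => if k ≤ s then p.v k else d (t + (k - s))) (k + 1)) := by
    intro k hk
    by_cases hks : k < s
    · simp only [if_pos hks, if_pos (show k ≤ s by omega), if_pos (show k + 1 ≤ s by omega)]
      exact p.edge k (by omega)
    · simp only [if_neg hks, if_neg (show ¬ (k + 1 ≤ s) by omega)]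
      have hvk : (if k ≤ s then p.v k else d (t + (k - s))) = d (t + (k - s)) := by
        by_cases h' : k ≤ s
        · have hks' : k = s := by omega
          subst hks'
          rw [if_pos h', hvst]
          congr 1
          omega
        · rw [if_neg h']
      rw [hvk]
      have hlt : t + (k - s) < m := by omega
      have : t + (k + 1 - s) = t + (k - s) + 1 := by omega
      show G.arrow (d (t + (k - s))) (d (t + (k + 1 - s)))
      rw [this]
      exact hde _ hlt
  have hinj : ∀ x, x ≤ s + (m - t) → ∀ y, y ≤ s + (m - t) →
      (fun k => if k ≤ s then p.v k else d (t + (k - s))) x =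
        (fun k => if k ≤ s then p.v k else d (t + (k - s))) y → x = y := by
    have key : ∀ x, x ≤ s → ∀ y, s < y → y ≤ s + (m - t) →
        p.v x ≠ d (t + (y - s)) := by
      intro x hx y hy hy' hEq
      by_cases hxs : x < s
      · exact hmin x hxs (t + (y - s)) (by omega) hEq
      · have hxs' : x = s := by omega
        subst hxs'
        rw [hvst] at hEq
        have := hdinj t (by omega) (t + (y - s)) (by omega) hEq
        omega
    intro x hx y hy hEq
    simp only at hEq
    by_cases hxs : x ≤ s <;> by_cases hys : y ≤ s
    · rw [if_pos hxs, if_pos hys] at hEq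
      exact p.inj x (by omega) y (by omega) hEq
    · rw [if_pos hxs, if_neg hys] at hEq
      exact absurd hEq (key x hxs y (by omega) hy)
    · rw [if_neg hxs, if_pos hys] at hEq
      exact absurd hEq.symm (key y hys x (by omega) hx)
    · rw [if_neg hxs, if_neg hys] at hEq
      have := hdinj (t + (x - s)) (by omega) (t + (y - s)) (by omega) hEq
      omega
  set q : PathIn G :=
    { n := s + (m - t)
      v := fun k => if k ≤ s then p.v k else d (t + (k - s))
      e := fun k => if k < s then p.e k else EDir.fwd
      one_le := hN1
      edge := hedge
      inj := hinj } with hq_def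
  have hqn : q.n = s + (m - t) := rfl
  have hv_le : ∀ k, k ≤ s → q.v k = p.v k := by
    intro k hk
    show (if k ≤ s then p.v k else d (t + (k - s))) = p.v k
    rw [if_pos hk]
  have hv_ge : ∀ k, s ≤ k → q.v k = d (t + (k - s)) := by
    intro k hk
    show (if k ≤ s then p.v k else d (t + (k - s))) = d (t + (k - s))
    by_cases h' : k ≤ s
    · rw [if_pos h']
      have hks : k = s := by omega
      subst hks
      rw [hvst]
      congr 1
      omega
    · rw [if_neg h']
  have he_lt : ∀ k, k < s → q.e k = p.e k := by
    intro k hk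
    show (if k < s then p.e k else EDir.fwd) = p.e k
    rw [if_pos hk]
  have he_ge : ∀ k, s ≤ k → q.e k = EDir.fwd := by
    intro k hk
    show (if k < s then p.e k else EDir.fwd) = EDir.fwd
    rw [if_neg (by omega)]
  have hcoll_lt : ∀ k, 1 ≤ k → k < s → (q.Collider k ↔ p.Collider k) := by
    intro k hk1 hk2
    unfold PathIn.Collider PathIn.headRight PathIn.headLeft
    rw [he_lt (k - 1) (by omega), he_lt k hk2]
  have hnotcol_ge : ∀ k, s ≤ k → ¬ q.Collider k := by
    intro k hk hcolk
    obtain ⟨-, hL⟩ := hcolk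
    unfold PathIn.headLeft at hL
    rw [he_ge k hk] at hL
    rcases hL with h | h <;> exact EDir.noConfusion h
  have hPq : q.PPred S C := by
    intro k hk1 hk2
    rw [hqn] at hk2
    by_cases hks : k < s
    · obtain ⟨hc, hnc⟩ := hPred k hk1 (by omega)
      have hsc : p.scCond k → q.scCond k := by
        intro ⟨ha, hb⟩
        constructor
        · intro hL
          rw [hv_le (k - 1) (by omega), hv_le k (by omega)]
          apply ha
          unfold PathIn.headLeft at hL ⊢
          rw [he_lt (k - 1) (by omega)] at hL
          exact hL
        · intro hR
          rw [hv_le (k + 1) (by omega), hv_le k (by omega)]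
          apply hb
          unfold PathIn.headRight at hR ⊢
          rw [he_lt k hks] at hR
          exact hR
      constructor
      · intro h
        rw [hv_le k (by omega)]
        exact hc ((hcoll_lt k hk1 hks).mp h)
      · intro h
        rcases hnc (fun hcolk => h ((hcoll_lt k hk1 hks).mpr hcolk)) with hnotC | hsc'
        · left
          rw [hv_le k (by omega)]
          exact hnotC
        · right
          exact hsc hsc'
    · constructor
      · intro h
        exact absurd h (hnotcol_ge k (by omega))
      · intro _
        left
        rw [hv_ge k (by omega)]
        exact hdnotC _ (by omega)
  have hmemlt : ∀ k, k ∈ q.badF C → k < s := by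
    intro k hk
    rw [PathIn.mem_badF] at hk
    by_contra h'
    exact hnotcol_ge k (by omega) hk.2.2.1
  have hsub : q.badF C ⊆ p.badF C := by
    intro k hk
    have hks := hmemlt k hk
    rw [PathIn.mem_badF] at hk ⊢
    obtain ⟨hkn, hk1, hkc, hkC⟩ := hk
    refine ⟨by omega, hk1, (hcoll_lt k hk1 hks).mp hkc, ?_⟩
    rw [hv_le k (by omega)] at hkC
    exact hkC
  have hrbad : r ∈ p.badF C := PathIn.mem_badF.mpr ⟨h2, h1, hcol, hbad⟩
  have hrnot : r ∉ q.badF C := fun h => by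
    have := hmemlt r h
    omega
  refine ⟨q, ?_, ?_, hPq, ?_⟩
  · rw [hv_le 0 (by omega)]
  · rw [hqn, hv_ge (s + (m - t)) (by omega)]
    have : t + (s + (m - t) - s) = m := by omega
    rw [this, hdm]
  · exact Finset.card_lt_card ((Finset.ssubset_iff_of_subset hsub).mpr ⟨r, hrbad, hrnot⟩)

private lemma sigmaConnecting_of_card_zero {C S : Set V} {p : PathIn G}
    (hP : p.PPred S C) (h : (p.badF C).card = 0) : p.SigmaConnecting C := by
  intro k hk1 hk2
  obtain ⟨hc, hnc⟩ := hP k hk1 hk2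
  constructor
  · intro hcol
    by_contra hmem
    have hk : k ∈ p.badF C := PathIn.mem_badF.mpr ⟨hk2, hk1, hcol, hmem⟩
    have := Finset.card_pos.mpr ⟨k, hk⟩
    omega
  · exact hnc

private lemma exists_conn (C : Set V) (i j : V) :
    ∀ N : ℕ, ∀ a b : V, ((a = i ∧ b = j) ∨ (a = j ∧ b = i)) →
      ∀ p : PathIn G, p.v 0 = a → p.v p.n = b →
        p.PPred (G.anc i ∪ G.anc j) C → (p.badF C).card ≤ N →
        ∃ q : PathIn G, q.v 0 = a ∧ q.v q.n = b ∧ q.SigmaConnecting C := by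
  intro N
  induction N with
  | zero =>
      intro a b hab p h0 hn hP hcard
      exact ⟨p, h0, hn, sigmaConnecting_of_card_zero hP (by omega)⟩
  | succ N ih =>
      intro a b hab p h0 hn hP hcard
      by_cases h0' : (p.badF C).card = 0
      · exact ⟨p, h0, hn, sigmaConnecting_of_card_zero hP h0'⟩
      · obtain ⟨r, hr⟩ := Finset.card_pos.mp (Nat.pos_of_ne_zero h0')
        rw [PathIn.mem_badF] at hr
        obtain ⟨hrn, hr1, hrc, hrC⟩ := hr
        have hmem : p.v r ∈ G.anc i ∪ G.anc j := (hP r hr1 hrn).1 hrc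
        have hmem' : p.v r ∈ G.anc b ∨ p.v r ∈ G.anc a := by
          rcases hab with ⟨ha, hb⟩ | ⟨ha, hb⟩ <;> subst ha <;> subst hb <;>
            rcases hmem with h | h <;> tauto
        rcases hmem' with hmb | hma
        · obtain ⟨q, hq0, hqn, hqP, hqcard⟩ :=
            construct_step (G.anc i ∪ G.anc j) C p r hr1 hrn hrc hrC
              (by rw [hn]; exact hmb) hP
          exact ih a b hab q (hq0.trans h0) (hqn.trans hn) hqP (by omega)
        · have hb1 : 1 ≤ p.n - r := by omega
          have hb2 : p.n - r < p.n := by omega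
          have hnr : p.n - (p.n - r) = r := by omega
          have hcol' : p.reverse.Collider (p.n - r) := by
            rw [p.reverse_collider hb1 hb2, hnr]
            exact hrc
          have hbad' : p.reverse.v (p.n - r) ∉ C ∪ G.ancSet C := by
            rw [PathIn.reverse_v, hnr]
            exact hrC
          have hanc' : p.reverse.v (p.n - r) ∈ G.anc (p.reverse.v p.reverse.n) := by
            have e0 : p.reverse.v p.reverse.n = a := by
              rw [PathIn.reverse_n, PathIn.reverse_v, Nat.sub_self, h0]
            rw [e0, PathIn.reverse_v, hnr]
            exact hma
          obtain ⟨q, hq0, hqn, hqP, hqcard⟩ :=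
            construct_step (G.anc i ∪ G.anc j) C p.reverse (p.n - r) hb1
              (by rw [PathIn.reverse_n]; exact hb2) hcol' hbad' hanc' hP.reverse
          rw [p.badF_reverse_card] at hqcard
          have hq0' : q.v 0 = b := by
            rw [hq0, PathIn.reverse_v, Nat.sub_zero, hn]
          have hqn' : q.v q.n = a := by
            rw [hqn, PathIn.reverse_n, PathIn.reverse_v, Nat.sub_self, h0]
          obtain ⟨q2, hq20, hq2n, hq2σ⟩ :=
            ih b a (by tauto) q hq0' hqn' hqP (by omega)
          refine ⟨q2.reverse, ?_, ?_, ?_⟩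
          · rw [PathIn.reverse_v, Nat.sub_zero, hq2n]
          · rw [PathIn.reverse_n, PathIn.reverse_v, Nat.sub_self, hq20]
          · rw [PathIn.sigmaConnecting_iff_pPred] at hq2σ ⊢
            exact hq2σ.reverse

private lemma ancSet_pair (G : MixedGraph V) (i j : V) :
    G.ancSet {i, j} = (G.anc i ∪ G.anc j) \ {i, j} := by
  unfold MixedGraph.ancSet
  rw [Set.biUnion_pair]

private lemma mem_anc_union {i j x : V} (hxi : x ≠ i) (hxj : x ≠ j)
    (hx : x ∈ G.ancSet {i, j} ∪ G.ancSet (G.ancSet {i, j})) :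
    x ∈ G.anc i ∪ G.anc j := by
  rcases hx with hx | hx
  · rw [ancSet_pair] at hx
    exact hx.1
  · obtain ⟨hmem, -⟩ := hx
    simp only [Set.mem_iUnion] at hmem
    obtain ⟨c, hc, hxc⟩ := hmem
    rw [ancSet_pair] at hc
    obtain ⟨hc', -⟩ := hc
    rcases hc' with hci | hcj
    · left
      exact ⟨hxi, hxc.2.trans hci.2⟩
    · right
      exact ⟨hxj, hxc.2.trans hcj.2⟩

end PairwiseAux2

section PairwiseAux3

variable {V : Type} {G : MixedGraph V}

private lemma fwd_chain {i j : V} {p : PathIn G}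
    (h0 : p.v 0 = i) (hn : p.v p.n = j)
    (hσ : p.SigmaConnecting (G.ancSet {i, j})) :
    ∀ K r, 1 ≤ r → r < p.n → p.n - r ≤ K → p.e r = EDir.fwd →
      p.v r ∈ G.anc i ∪ G.anc j := by
  intro K
  induction K with
  | zero =>
      intro r h1 h2 hK _
      omega
  | succ K ih =>
      intro r h1 h2 hK he
      have harr : G.arrow (p.v r) (p.v (r + 1)) := by
        have h := p.edge r h2
        rw [he] at h
        exact h
      have hri : p.v r ≠ i := by
        intro hEq
        have := p.inj r (by omega) 0 (by omega) (by rw [hEq, h0])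
        omega
      have hrj : p.v r ≠ j := by
        intro hEq
        have := p.inj r (by omega) p.n (le_refl _) (by rw [hEq, hn])
        omega
      by_cases hrn : r + 1 = p.n
      · right
        refine ⟨hrj, Relation.TransGen.single ?_⟩
        rw [← hn, ← hrn]
        exact harr
      · by_cases hmem : p.v (r + 1) ∈ G.anc i ∪ G.anc j
        · rcases hmem with h | h
          · exact Or.inl ⟨hri, Relation.TransGen.head harr h.2⟩
          · exact Or.inr ⟨hrj, Relation.TransGen.head harr h.2⟩
        · have hR1 : 1 ≤ r + 1 := by omega
          have hR2 : r + 1 < p.n := by omega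
          have hne_i : p.v (r + 1) ≠ i := by
            intro hEq
            have := p.inj (r + 1) (by omega) 0 (by omega) (by rw [hEq, h0])
            omega
          have hne_j : p.v (r + 1) ≠ j := by
            intro hEq
            have := p.inj (r + 1) (by omega) p.n (le_refl _) (by rw [hEq, hn])
            omega
          have hncol : ¬ p.Collider (r + 1) := by
            intro hcol
            exact hmem (mem_anc_union hne_i hne_j ((hσ (r + 1) hR1 hR2).1 hcol))
          have hHR : p.headRight r := Or.inl he
          have hnl : ¬ p.headLeft (r + 1) := by
            intro hL
            apply hncol
            constructor
            · rw [Nat.add_sub_cancel]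
              exact hHR
            · exact hL
          have hfwd : p.e (r + 1) = EDir.fwd := by
            cases hE : p.e (r + 1)
            · rfl
            · exact absurd (Or.inl hE) hnl
            · exact absurd (Or.inr hE) hnl
          exact absurd (ih (r + 1) hR1 hR2 (by omega) hfwd) hmem

private lemma bwd_chain {i j : V} {p : PathIn G}
    (h0 : p.v 0 = i) (hn : p.v p.n = j)
    (hσ : p.SigmaConnecting (G.ancSet {i, j})) :
    ∀ K r, 1 ≤ r → r < p.n → r ≤ K → p.e (r - 1) = EDir.bwd →
      p.v r ∈ G.anc i ∪ G.anc j := by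
  intro K
  induction K with
  | zero =>
      intro r h1 h2 hK _
      omega
  | succ K ih =>
      intro r h1 h2 hK he
      have harr : G.arrow (p.v r) (p.v (r - 1)) := by
        have h := p.edge (r - 1) (by omega)
        rw [he] at h
        have hr1 : r - 1 + 1 = r := by omega
        rw [hr1] at h
        exact h
      have hri : p.v r ≠ i := by
        intro hEq
        have := p.inj r (by omega) 0 (by omega) (by rw [hEq, h0])
        omega
      have hrj : p.v r ≠ j := by
        intro hEq
        have := p.inj r (by omega) p.n (le_refl _) (by rw [hEq, hn])
        omega
      by_cases hr0 : r - 1 = 0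
      · left
        refine ⟨hri, Relation.TransGen.single ?_⟩
        rw [← h0, ← hr0]
        exact harr
      · by_cases hmem : p.v (r - 1) ∈ G.anc i ∪ G.anc j
        · rcases hmem with h | h
          · exact Or.inl ⟨hri, Relation.TransGen.head harr h.2⟩
          · exact Or.inr ⟨hrj, Relation.TransGen.head harr h.2⟩
        · have hR1 : 1 ≤ r - 1 := by omega
          have hR2 : r - 1 < p.n := by omega
          have hne_i : p.v (r - 1) ≠ i := by
            intro hEq
            have := p.inj (r - 1) (by omega) 0 (by omega) (by rw [hEq, h0])
            omega
          have hne_j : p.v (r - 1) ≠ j := by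
            intro hEq
            have := p.inj (r - 1) (by omega) p.n (le_refl _) (by rw [hEq, hn])
            omega
          have hncol : ¬ p.Collider (r - 1) := by
            intro hcol
            exact hmem (mem_anc_union hne_i hne_j ((hσ (r - 1) hR1 hR2).1 hcol))
          have hHL : p.headLeft (r - 1) := Or.inl he
          have hnr : ¬ p.headRight (r - 1 - 1) := by
            intro hR
            exact hncol ⟨hR, hHL⟩
          have hbwd : p.e (r - 1 - 1) = EDir.bwd := by
            cases hE : p.e (r - 1 - 1)
            · exact absurd (Or.inl hE) hnr
            · rfl
            · exact absurd (Or.inr hE) hnr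
          exact absurd (ih (r - 1) hR1 hR2 (by omega) hbwd) hmem

private lemma inner_mem_anc {i j : V} {p : PathIn G}
    (h0 : p.v 0 = i) (hn : p.v p.n = j)
    (hσ : p.SigmaConnecting (G.ancSet {i, j})) :
    ∀ r, 1 ≤ r → r < p.n → p.v r ∈ G.anc i ∪ G.anc j := by
  intro r h1 h2
  have hne_i : p.v r ≠ i := by
    intro hEq
    have := p.inj r (by omega) 0 (by omega) (by rw [hEq, h0])
    omega
  have hne_j : p.v r ≠ j := by
    intro hEq
    have := p.inj r (by omega) p.n (le_refl _) (by rw [hEq, hn])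
    omega
  by_cases hcol : p.Collider r
  · exact mem_anc_union hne_i hne_j ((hσ r h1 h2).1 hcol)
  · by_cases hL : p.headLeft r
    · have hnr : ¬ p.headRight (r - 1) := fun h => hcol ⟨h, hL⟩
      have hbwd : p.e (r - 1) = EDir.bwd := by
        cases hE : p.e (r - 1)
        · exact absurd (Or.inl hE) hnr
        · rfl
        · exact absurd (Or.inr hE) hnr
      exact bwd_chain h0 hn hσ p.n r h1 h2 (by omega) hbwd
    · have hfwd : p.e r = EDir.fwd := by
        cases hE : p.e r
        · rfl
        · exact absurd (Or.inl hE) hL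
        · exact absurd (Or.inr hE) hL
      exact fwd_chain h0 hn hσ p.n r h1 h2 (by omega) hfwd

private lemma sigmaSep_ancSet_of_sep {i j : V} (C₀ : Set V)
    (hsep : SigmaSep G {i} {j} C₀) :
    SigmaSep G {i} {j} (G.ancSet {i, j}) := by
  intro hcon
  obtain ⟨p, hp0, hpn, hσ⟩ := hcon
  rw [Set.mem_singleton_iff] at hp0 hpn
  have hPred : p.PPred (G.anc i ∪ G.anc j) (C₀) := by
    intro r h1 h2
    have hmem := inner_mem_anc hp0 hpn hσ r h1 h2
    constructor
    · intro _
      exact hmem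
    · intro hncol
      right
      have hne_i : p.v r ≠ i := by
        intro hEq
        have := p.inj r (by omega) 0 (by omega) (by rw [hEq, hp0])
        omega
      have hne_j : p.v r ≠ j := by
        intro hEq
        have := p.inj r (by omega) p.n (le_refl _) (by rw [hEq, hpn])
        omega
      have hinA : p.v r ∈ G.ancSet {i, j} := by
        rw [ancSet_pair]
        refine ⟨hmem, ?_⟩
        simp [hne_i, hne_j]
      rcases (hσ r h1 h2).2 hncol with hnot | hsc
      · exact absurd hinA hnot
      · exact hsc
  obtain ⟨q, hq0, hqn, hqσ⟩ :=
    exists_conn C₀ i j ((p.badF C₀).card) i j (Or.inl ⟨rfl, rfl⟩) p hp0 hpn hPred (le_refl _)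
  exact hsep ⟨q, by rw [hq0]; exact Set.mem_singleton i, by rw [hqn]; exact Set.mem_singleton j, hqσ⟩

end PairwiseAux3


section Statements


variable [Fintype V]

/-- For a maximal BDMG `G`, the global Markov property implies the pairwise
Markov property. -/
theorem stmt1 (G : MixedGraph V) (hG : G.IsBDMG) (hmax : MaximalGraph G)
    (P : Measure (∀ i, X i)) (hP : IsProbabilityMeasure P)
    (hGM : GlobalMarkovSigma G P) :
    PairwiseMarkov G P := by
  intro i j hij hadj
  obtain ⟨-, C₀, hiC, hjC, hsep⟩ := hmax i j hij hadj
  have hA : SigmaSep G {i} {j} (G.ancSet {i, j}) := sigmaSep_ancSet_of_sep C₀ hsep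
  have hd1 : Disjoint ({i} : Set V) {j} := by simp [Set.disjoint_singleton_left, hij]
  have hd2 : Disjoint ({i} : Set V) (G.ancSet {i, j}) := by
    rw [Set.disjoint_singleton_left, MixedGraph.ancSet]
    simp
  have hd3 : Disjoint ({j} : Set V) (G.ancSet {i, j}) := by
    rw [Set.disjoint_singleton_left, MixedGraph.ancSet]
    simp
  exact hGM {i} {j} (G.ancSet {i, j}) hd1 hd2 hd3 hA

end Statements

end CausalAxioms
end

section
/- In a bowless directed mixed graph (BDMG), every inseparable pair of non-adjacent nodes is connected by a primitive inducing path (PIP). -/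
open MeasureTheory ProbabilityTheory

namespace CausalAxioms

/-! ### Conditional independence for coordinates of a product space -/

variable {V : Type} {X : V → Type} [∀ i, MeasurableSpace (X i)]

/-! ### Interventional families -/

variable (Pdo : V → Measure (∀ i, X i))

variable {Ω : Type} [MeasurableSpace Ω] {E : V → Type} [∀ i, MeasurableSpace (E i)]

section Statements


variable [Fintype V]

private lemma sc_mem_symm {V : Type} (G : MixedGraph V) {x y : V} (h : x ∈ G.sc y) :
    y ∈ G.sc x := by
  simp only [MixedGraph.sc, Set.mem_setOf_eq] at h ⊢
  rcases h with h | ⟨h1, h2⟩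
  · exact Or.inl h.symm
  · exact Or.inr ⟨h2, h1⟩

private lemma mem_ancSet_pair {V : Type} (G : MixedGraph V) {i j x y : V}
    (hxi : x ≠ i) (hxj : x ≠ j) (ht : Relation.TransGen G.arrow x y)
    (hy : y ∈ G.ancSet {i, j} ∪ ({i, j} : Set V)) : x ∈ G.ancSet {i, j} := by
  have key : ∀ t, (t = i ∨ t = j) → Relation.TransGen G.arrow x t →
      x ∈ G.ancSet {i, j} := by
    intro t htij htr
    simp only [MixedGraph.ancSet, Set.mem_diff, Set.mem_iUnion, Set.mem_insert_iff,
      Set.mem_singleton_iff, MixedGraph.anc, Set.mem_setOf_eq]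
    refine ⟨⟨t, htij, ?_, htr⟩, ?_⟩
    · rcases htij with rfl | rfl <;> assumption
    · push_neg
      exact ⟨hxi, hxj⟩
  rcases hy with hy | hy
  · obtain ⟨hy1, -⟩ := hy
    simp only [Set.mem_iUnion, Set.mem_insert_iff, Set.mem_singleton_iff,
      MixedGraph.anc, Set.mem_setOf_eq] at hy1
    obtain ⟨t, htij, -, htr⟩ := hy1
    exact key t htij (ht.trans htr)
  · simp only [Set.mem_insert_iff, Set.mem_singleton_iff] at hy
    exact key y hy ht

/-- In a BDMG, every inseparable pair of non-adjacent nodes is connected by a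
primitive inducing path. -/
theorem stmt2 {V : Type} (G : MixedGraph V) (hG : G.IsBDMG) (i j : V) (hij : i ≠ j)
    (hnadj : ¬ G.Adj i j)
    (hinsep : ∀ C : Set V, i ∉ C → j ∉ C → ¬ SigmaSep G {i} {j} C) :
    ∃ p : PathIn G, p.v 0 = i ∧ p.v p.n = j ∧ IsPIP G p := by
  classical
  set C := G.ancSet {i, j} with hCdef
  have hiC : i ∉ C := fun h => h.2 (Set.mem_insert _ _)
  have hjC : j ∉ C := fun h => h.2 (Set.mem_insert_of_mem _ rfl)
  have h := hinsep C hiC hjC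
  rw [SigmaSep, not_not] at h
  obtain ⟨p, hp0', hpn', hconn⟩ := h
  have hp0 : p.v 0 = i := hp0'
  have hpn : p.v p.n = j := hpn'
  have hinner : ∀ r, 1 ≤ r → r < p.n → p.v r ≠ i ∧ p.v r ≠ j := by
    intro r h1 h2
    constructor
    · intro he
      have := p.inj r (le_of_lt h2) 0 (Nat.zero_le _) (he.trans hp0.symm)
      omega
    · intro he
      have := p.inj r (le_of_lt h2) p.n le_rfl (he.trans hpn.symm)
      omega
  have hcolC : ∀ r, 1 ≤ r → r < p.n → p.v r ∈ C ∪ G.ancSet C → p.v r ∈ C := by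
    intro r h1 h2 hm
    rw [Set.mem_union] at hm
    rcases hm with hm | hm
    · exact hm
    · obtain ⟨hm1, -⟩ := hm
      simp only [Set.mem_iUnion, MixedGraph.anc, Set.mem_setOf_eq] at hm1
      obtain ⟨c, hc, -, htr⟩ := hm1
      exact mem_ancSet_pair G (hinner r h1 h2).1 (hinner r h1 h2).2 htr
        (Set.mem_union_left _ hc)
  have hedge_fwd : ∀ r, r < p.n → p.e r = EDir.fwd → G.arrow (p.v r) (p.v (r + 1)) := by
    intro r hr he
    have h := p.edge r hr
    rw [he] at h
    exact h
  have hedge_bwd : ∀ r, r < p.n → p.e r = EDir.bwd → G.arrow (p.v (r + 1)) (p.v r) := by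
    intro r hr he
    have h := p.edge r hr
    rw [he] at h
    exact h
  have hnotHR : ∀ r, ¬ p.headRight r → p.e r = EDir.bwd := by
    intro r h
    cases he : p.e r with
    | fwd => exact absurd (show p.headRight r from Or.inl he) h
    | bwd => rfl
    | biarc => exact absurd (show p.headRight r from Or.inr he) h
  have hnotHL : ∀ r, ¬ p.headLeft r → p.e r = EDir.fwd := by
    intro r h
    cases he : p.e r with
    | fwd => rfl
    | bwd => exact absurd (show p.headLeft r from Or.inl he) h
    | biarc => exact absurd (show p.headLeft r from Or.inr he) h
  -- Claim A: forward edges point (eventually) to members of C ∪ {i, j}.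
  have claimA : ∀ k r, p.n - r ≤ k → r < p.n → p.e r = EDir.fwd →
      p.v (r + 1) ∈ C ∪ ({i, j} : Set V) := by
    intro k
    induction k with
    | zero => intro r hk hr _; omega
    | succ k ih =>
      intro r hk hr he
      by_cases hlast : r + 1 = p.n
      · rw [hlast, hpn]
        exact Set.mem_union_right _ (Set.mem_insert_of_mem _ rfl)
      have hr1 : r + 1 < p.n := lt_of_le_of_ne (Nat.succ_le_of_lt hr) hlast
      have h1 : 1 ≤ r + 1 := Nat.le_add_left 1 r
      by_cases hC : p.v (r + 1) ∈ C
      · exact Set.mem_union_left _ hC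
      by_cases hcol : p.Collider (r + 1)
      · exact Set.mem_union_left _
          (hcolC (r + 1) h1 hr1 ((hconn (r + 1) h1 hr1).1 hcol))
      · have hHR : p.headRight (r + 1 - 1) := Or.inl he
        have hHL : ¬ p.headLeft (r + 1) := fun hl => hcol ⟨hHR, hl⟩
        have he1 : p.e (r + 1) = EDir.fwd := hnotHL _ hHL
        have hnext := ih (r + 1) (by omega) hr1 he1
        exact Set.mem_union_left _
          (mem_ancSet_pair G (hinner (r + 1) h1 hr1).1 (hinner (r + 1) h1 hr1).2
            (Relation.TransGen.single (hedge_fwd (r + 1) hr1 he1)) hnext)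
  -- Claim B: backward edges point (eventually) back to members of C ∪ {i, j}.
  have claimB : ∀ k r, r ≤ k → r < p.n → p.e r = EDir.bwd →
      p.v r ∈ C ∪ ({i, j} : Set V) := by
    intro k
    induction k with
    | zero =>
      intro r hk hr _
      have : r = 0 := Nat.le_zero.mp hk
      subst this
      rw [hp0]
      exact Set.mem_union_right _ (Set.mem_insert _ _)
    | succ k ih =>
      intro r hk hr he
      rcases Nat.eq_zero_or_pos r with rfl | h1
      · rw [hp0]
        exact Set.mem_union_right _ (Set.mem_insert _ _)
      by_cases hC : p.v r ∈ C
      · exact Set.mem_union_left _ hC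
      by_cases hcol : p.Collider r
      · exact Set.mem_union_left _ (hcolC r h1 hr ((hconn r h1 hr).1 hcol))
      · have hHL : p.headLeft r := Or.inl he
        have hHR : ¬ p.headRight (r - 1) := fun hh => hcol ⟨hh, hHL⟩
        have heb : p.e (r - 1) = EDir.bwd := hnotHR _ hHR
        have harr := hedge_bwd (r - 1) (by omega) heb
        rw [Nat.sub_add_cancel h1] at harr
        have hprev := ih (r - 1) (by omega) (by omega) heb
        exact Set.mem_union_left _
          (mem_ancSet_pair G (hinner r h1 hr).1 (hinner r h1 hr).2
            (Relation.TransGen.single harr) hprev)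
  -- Every inner node lies in C = an({i, j}).
  have hinnerC : ∀ r, 1 ≤ r → r < p.n → p.v r ∈ C := by
    intro r h1 h2
    by_cases hcol : p.Collider r
    · exact hcolC r h1 h2 ((hconn r h1 h2).1 hcol)
    by_cases hHR : p.headRight (r - 1)
    · have hHL : ¬ p.headLeft r := fun hl => hcol ⟨hHR, hl⟩
      have he : p.e r = EDir.fwd := hnotHL _ hHL
      exact mem_ancSet_pair G (hinner r h1 h2).1 (hinner r h1 h2).2
        (Relation.TransGen.single (hedge_fwd r h2 he)) (claimA p.n r (by omega) h2 he)
    · have heb : p.e (r - 1) = EDir.bwd := hnotHR _ hHR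
      have harr := hedge_bwd (r - 1) (by omega) heb
      rw [Nat.sub_add_cancel h1] at harr
      exact mem_ancSet_pair G (hinner r h1 h2).1 (hinner r h1 h2).2
        (Relation.TransGen.single harr) (claimB p.n (r - 1) (by omega) (by omega) heb)
  -- The path has at least three nodes.
  have hn2 : 2 ≤ p.n := by
    by_contra hn
    have hn1 : p.n = 1 := by have := p.one_le; omega
    have he := p.edge 0 (by omega)
    have hv1 : p.v 1 = j := by rw [← hn1]; exact hpn
    apply hnadj
    cases h0 : p.e 0 with
    | fwd =>
      rw [h0] at he
      rw [hp0, hv1] at he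
      exact Or.inl he
    | bwd =>
      rw [h0] at he
      rw [hp0, hv1] at he
      exact Or.inr (Or.inl he)
    | biarc =>
      rw [h0] at he
      rw [hp0, hv1] at he
      rcases he with he | he
      · exact Or.inr (Or.inr (Or.inl he))
      · exact Or.inr (Or.inr (Or.inr he))
  refine ⟨p, hp0, hpn, hn2, ?_, ?_⟩
  · intro r hr
    cases he : p.e r with
    | biarc => exact Or.inl rfl
    | fwd =>
      rcases Nat.eq_zero_or_pos r with rfl | h1
      · exact Or.inr (Or.inr (Or.inl ⟨rfl, rfl⟩))
      · have hcol : ¬ p.Collider r := by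
          intro hc
          have h2 : p.e r = EDir.bwd ∨ p.e r = EDir.biarc := hc.2
          rcases h2 with h2 | h2 <;> rw [he] at h2 <;> exact EDir.noConfusion h2
        have hcc := (hconn r h1 hr).2 hcol
        rcases hcc with hnc | hcc
        · exact absurd (hinnerC r h1 hr) hnc
        · have hsc := hcc.2 (Or.inl he)
          exact Or.inr (Or.inl (sc_mem_symm G hsc))
    | bwd =>
      by_cases hlast : r + 1 = p.n
      · exact Or.inr (Or.inr (Or.inr ⟨hlast, rfl⟩))
      · have hr1 : r + 1 < p.n := lt_of_le_of_ne (Nat.succ_le_of_lt hr) hlast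
        have h1 : 1 ≤ r + 1 := Nat.le_add_left 1 r
        have hcol : ¬ p.Collider (r + 1) := by
          intro hc
          have h2 : p.e (r + 1 - 1) = EDir.fwd ∨ p.e (r + 1 - 1) = EDir.biarc := hc.1
          simp only [Nat.add_sub_cancel] at h2
          rcases h2 with h2 | h2 <;> rw [he] at h2 <;> exact EDir.noConfusion h2
        have hcc := (hconn (r + 1) h1 hr1).2 hcol
        rcases hcc with hnc | hcc
        · exact absurd (hinnerC (r + 1) h1 hr1) hnc
        · have hhl : p.headLeft (r + 1 - 1) := by
            simp only [Nat.add_sub_cancel]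
            exact Or.inl he
          have hsc := hcc.1 hhl
          simp only [Nat.add_sub_cancel] at hsc
          exact Or.inr (Or.inl hsc)
  · intro r h1 h2
    rw [hp0, hpn]
    exact hinnerC r h1 h2

end Statements

end CausalAxioms
end

section
/- Let 𝒫_do = {P_do(i)}_{i∈V} be an interventional family whose members P_do(i) each satisfy singleton-transitivity. Assume that for all distinct i,j,k ∈ V with i ∉ cause(k) and j ∈ cause(k): (a) i ⊥_{P_do(i)} k | j, and (b) j ⊥̸_{P_do(i)} k. Then 𝒫_do is a transitive interventional family: for all distinct i,j,k, i ∈ cause(j) and j ∈ cause(k) imply i ∈ cause(k). -/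
open MeasureTheory ProbabilityTheory

namespace CausalAxioms

/-! ### Conditional independence for coordinates of a product space -/

variable {V : Type} {X : V → Type} [∀ i, MeasurableSpace (X i)]

/-! ### Interventional families -/

variable (Pdo : V → Measure (∀ i, X i))

variable {Ω : Type} [MeasurableSpace Ω] {E : V → Type} [∀ i, MeasurableSpace (E i)]

section Statements


variable [Fintype V]

theorem CI_symm {P : Measure (∀ i, X i)} {A B C : Set V} (h : CI P A B C) : CI P B A C := by
  intro s t hs ht
  have := h t s ht hs
  simpa [Set.inter_comm, mul_comm] using this

/-- An interventional family whose members satisfy singleton-transitivity and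
conditions (a), (b) is transitive. -/
theorem stmt5 (Pdo : V → Measure (∀ i, X i))
    (hprob : ∀ i, IsProbabilityMeasure (Pdo i))
    (hst : ∀ i, SingletonTransProp (Pdo i))
    (ha : ∀ i j k : V, i ≠ j → i ≠ k → j ≠ k → i ∉ cause Pdo k → j ∈ cause Pdo k →
      CI (Pdo i) {i} {k} {j})
    (hb : ∀ i j k : V, i ≠ j → i ≠ k → j ≠ k → i ∉ cause Pdo k → j ∈ cause Pdo k →
      ¬ CI (Pdo i) {j} {k} ∅) :
    TransitiveFam Pdo := by
  intro i j k hij hjk hik hicj hjck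
  by_contra hick
  -- i ∉ cause k, so CI (Pdo i) {i} {k} ∅
  have hci : CI (Pdo i) {i} {k} ∅ := by
    by_contra h
    exact hick ⟨hik, h⟩
  have hcij : CI (Pdo i) {i} {k} ({j} : Set V) := ha i j k hij hik hjk hick hjck
  have hcij' : CI (Pdo i) {i} {k} ((∅ : Set V) ∪ {j}) := by
    simpa using hcij
  have := hst i i k j ∅ hik hij (Ne.symm hjk)
    (Set.notMem_empty i) (Set.notMem_empty k) (Set.notMem_empty j)
    hci hcij'
  rcases this with h | h
  · exact hicj.2 h
  · exact hb i j k hij hik hjk hick hjck (CI_symm h)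

end Statements

end CausalAxioms
end

section
/- Let 𝒫_do = {P_do(i)}_{i∈V} be a transitive interventional family such that P_do(i) satisfies the composition property. If i ∉ cause(k), then i ⊥_{P_do(i)} k | cause(k). -/
open MeasureTheory ProbabilityTheory

namespace CausalAxioms

/-! ### Conditional independence for coordinates of a product space -/

variable {V : Type} {X : V → Type} [∀ i, MeasurableSpace (X i)]

/-! ### Interventional families -/

variable (Pdo : V → Measure (∀ i, X i))

variable {Ω : Type} [MeasurableSpace Ω] {E : V → Type} [∀ i, MeasurableSpace (E i)]

section Statements


variable [Fintype V]

section Helpers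

lemma coordσ_le (A : Set V) :
    coordσ X A ≤ (MeasurableSpace.pi : MeasurableSpace (∀ i, X i)) :=
  (A.measurable_restrict).comap_le

lemma coordσ_mono {A B : Set V} (h : A ⊆ B) : coordσ X A ≤ coordσ X B := by
  have he : (A.restrict : (∀ i, X i) → _) = Set.restrict₂ h ∘ B.restrict := rfl
  rw [coordσ, he, ← MeasurableSpace.comap_comp]
  exact MeasurableSpace.comap_mono (Set.measurable_restrict₂ h).comap_le

lemma coordσ_empty : coordσ X (∅ : Set V) = ⊥ := by
  have h : (MeasurableSpace.pi : MeasurableSpace (∀ j : (∅ : Set V), X j)) = ⊥ := by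
    have : (MeasurableSpace.pi : MeasurableSpace (∀ j : (∅ : Set V), X j))
        = ⨆ a : (∅ : Set V), MeasurableSpace.comap (fun b => b a) (by infer_instance) := rfl
    rw [this, iSup_of_empty]
  rw [coordσ, h, MeasurableSpace.comap_bot]

lemma CI_empty_prod {P : Measure (∀ i, X i)} [IsProbabilityMeasure P] {A B : Set V}
    (h : CI P A B ∅) {s t : Set (∀ i, X i)}
    (hs : MeasurableSet[coordσ X A] s) (ht : MeasurableSet[coordσ X B] t) :
    P (s ∩ t) = P s * P t := by
  have hsm : MeasurableSet s := coordσ_le A s hs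
  have htm : MeasurableSet t := coordσ_le B t ht
  have h1 := h s t hs ht
  rw [coordσ_empty (X := X), condExp_bot, condExp_bot, condExp_bot] at h1
  obtain ⟨x, hx⟩ := h1.exists
  simp only [Pi.mul_apply] at hx
  have e1 : (∫ x, Set.indicator (s ∩ t) (fun ω => (1 : ℝ)) x ∂P) = (P (s ∩ t)).toReal :=
    integral_indicator_one (hsm.inter htm)
  have e2 : (∫ x, Set.indicator s (fun ω => (1 : ℝ)) x ∂P) = (P s).toReal :=
    integral_indicator_one hsm
  have e3 : (∫ x, Set.indicator t (fun ω => (1 : ℝ)) x ∂P) = (P t).toReal :=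
    integral_indicator_one htm
  rw [e1, e2, e3, ← ENNReal.toReal_mul] at hx
  exact ENNReal.toReal_eq_toReal_iff' (measure_ne_top _ _)
    (ENNReal.mul_ne_top (measure_ne_top _ _) (measure_ne_top _ _)) |>.mp hx

lemma CI_weakUnion {P : Measure (∀ i, X i)} [IsProbabilityMeasure P] {A B C : Set V}
    (h : CI P A (B ∪ C) ∅) : CI P A B C := by
  intro s t hs ht
  have hmC : coordσ X C ≤ (MeasurableSpace.pi : MeasurableSpace (∀ i, X i)) := coordσ_le C
  haveI : SigmaFinite (P.trim hmC) := inferInstance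
  have hsm : MeasurableSet s := coordσ_le A s hs
  have htm : MeasurableSet t := coordσ_le B t ht
  have htBC : MeasurableSet[coordσ X (B ∪ C)] t := coordσ_mono Set.subset_union_left t ht
  set c : ℝ := (P s).toReal with hc
  have hft : Integrable (t.indicator fun _ => (1 : ℝ)) P := (integrable_const 1).indicator htm
  -- Step 1 : P⟦s | C⟧ is a.e. constant c
  have hs_const : (P⟦s | coordσ X C⟧) =ᵐ[P] fun _ => c := by
    refine (ae_eq_condExp_of_forall_setIntegral_eq hmC
      ((integrable_const 1).indicator hsm)
      (fun u _ _ => (integrable_const c).integrableOn)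
      (fun u hu _ => ?_) (stronglyMeasurable_const.aestronglyMeasurable)).symm
    have huBC : MeasurableSet[coordσ X (B ∪ C)] u := coordσ_mono Set.subset_union_right u hu
    rw [setIntegral_const, setIntegral_indicator hsm, setIntegral_const, measureReal_def, measureReal_def, Set.inter_comm u s,
      CI_empty_prod h hs huBC, ENNReal.toReal_mul]
    simp [hc, mul_comm]
  -- Step 2 : P⟦s ∩ t | C⟧ =ᵐ c • P⟦t | C⟧
  have hst : (P⟦s ∩ t | coordσ X C⟧) =ᵐ[P] fun x => c * (P⟦t | coordσ X C⟧) x := by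
    refine (ae_eq_condExp_of_forall_setIntegral_eq hmC
      ((integrable_const 1).indicator (hsm.inter htm))
      (fun u _ _ => (integrable_condExp.const_mul c).integrableOn)
      (fun u hu _ => ?_)
      ((stronglyMeasurable_condExp.const_mul c).aestronglyMeasurable)).symm
    have htuBC : MeasurableSet[coordσ X (B ∪ C)] (t ∩ u) :=
      MeasurableSet.inter htBC (coordσ_mono Set.subset_union_right u hu)
    rw [integral_const_mul, setIntegral_condExp hmC hft hu,
      setIntegral_indicator htm, setIntegral_const,
      setIntegral_indicator (hsm.inter htm), setIntegral_const]
    have h1 : u ∩ (s ∩ t) = s ∩ (t ∩ u) := by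
      ext x; simp only [Set.mem_inter_iff]; tauto
    have h2 : u ∩ t = t ∩ u := Set.inter_comm u t
    rw [h1, h2, measureReal_def, measureReal_def, CI_empty_prod h hs htuBC, ENNReal.toReal_mul]
    simp [hc]
  filter_upwards [hst, hs_const] with x h1 h2
  rw [h1, Pi.mul_apply, h2]

end Helpers

/-- For a transitive interventional family with `P_do(i)` satisfying
composition: if `i ∉ cause(k)` then `i ⊥_{P_do(i)} k | cause(k)`. -/
theorem stmt7 (Pdo : V → Measure (∀ i, X i))
    (hprob : ∀ i, IsProbabilityMeasure (Pdo i))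
    (htrans : TransitiveFam Pdo)
    (i k : V) (hik : i ≠ k) (hcomp : CompositionProp (Pdo i))
    (hnc : i ∉ cause Pdo k) :
    CI (Pdo i) {i} {k} (cause Pdo k) := by
  haveI := hprob i
  have hCIk : CI (Pdo i) {i} {k} ∅ := by
    by_contra hci
    exact hnc ⟨hik, hci⟩
  have key : ∀ F : Set V, F.Finite → F ⊆ cause Pdo k → CI (Pdo i) {i} ({k} ∪ F) ∅ := by
    intro F hF
    refine Set.Finite.induction_on F hF (fun _ => by simpa using hCIk) ?_
    intro a F haF hFfin IH hsub
    have haC : a ∈ cause Pdo k := hsub (Set.mem_insert a F)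
    have hFs : F ⊆ cause Pdo k := (Set.subset_insert a F).trans hsub
    have hak : a ≠ k := haC.1
    have hia : i ≠ a := fun h => hnc (h ▸ haC)
    have hCIa : CI (Pdo i) {i} {a} ∅ := by
      by_contra hci
      exact hnc (htrans i a k hia hak hik ⟨hia, hci⟩ haC)
    have hiF : i ∉ F := fun h => hnc (hFs h)
    have haKF : a ∉ ({k} ∪ F : Set V) := by
      simp only [Set.mem_union, Set.mem_singleton_iff]
      tauto
    have hres := hcomp {i} ({k} ∪ F) ∅ {a}
      (by simp [Set.disjoint_left, hik, hiF])
      (by simp) (by simp [hia]) (by simp) (Set.disjoint_singleton_right.mpr haKF)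
      (by simp) (IH hFs) hCIa
    rw [Set.union_assoc, Set.union_singleton] at hres
    exact hres
  exact CI_weakUnion (key (cause Pdo k) (Set.toFinite _) le_rfl)

end Statements

end CausalAxioms
end
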